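/- Let h: ℝ^d → [0,∞) be bounded with ‖h‖_{L²} < ∞, and let constants b_n, d_n satisfy bounds (2.10) with constant M, i.e. the coefficient-function bounds. Then the vector F ∈ ⊕_{n≥2}(1/n!)L²(ℝ^{dn}) defined by F_n(q₁,…,qₙ) = Σᵢ bₙ(q₁,…,q̌ᵢ,…,qₙ; qᵢ) f₁(qᵢ) + ∫ dₙ(q₁,…,qₙ; q) f₁(q) dq, for f₁ ∈ L²(ℝ^d), satisfies ‖F‖ ≤ C·M·‖f₁‖ for a constant C depending only on ‖h‖_{L²}, ‖h‖_∞ and d; in particular the map f₁ ↦ F is a bounded linear operator from L²(ℝ^d) into the n≥2 sector of Fock space. -/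

import Mathlib

open MeasureTheory
open scoped BigOperators ENNReal

private lemma lintegral_pi_prod_aux {E : Type*} [MeasurableSpace E] (μ : Measure E)
    [SigmaFinite μ] :
    ∀ {n : ℕ} (f : Fin n → E → ℝ≥0∞), (∀ i, Measurable (f i)) →
      (∫⁻ x : Fin n → E, ∏ i, f i (x i) ∂Measure.pi (fun _ => μ)) = ∏ i, ∫⁻ x, f i x ∂μ := by
  intro n
  induction n with
  | zero =>
      intro f hf
      simp [lintegral_const]
  | succ n ih =>
      intro f hf
      have hmp := measurePreserving_piFinSuccAbove (fun _ : Fin (n + 1) => μ) 0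
      have hg : Measurable (fun y : Fin n → E => ∏ j, f (Fin.succ j) (y j)) := by
        apply Finset.measurable_prod
        intro j _
        exact (hf _).comp (measurable_pi_apply j)
      have hFmeas : Measurable
          (fun y : E × (Fin n → E) => f 0 y.1 * ∏ j, f (Fin.succ j) (y.2 j)) :=
        ((hf 0).comp measurable_fst).mul (hg.comp measurable_snd)
      have step : (∫⁻ x : Fin (n + 1) → E, ∏ i, f i (x i) ∂Measure.pi (fun _ => μ))
          = ∫⁻ y : E × (Fin n → E), f 0 y.1 * ∏ j, f (Fin.succ j) (y.2 j)
              ∂((μ).prod (Measure.pi fun _ : Fin n => μ)) := by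
        rw [← hmp.lintegral_comp hFmeas]
        refine lintegral_congr fun x => ?_
        rw [Fin.prod_univ_succ]
        simp [MeasurableEquiv.piFinSuccAbove, Fin.insertNthEquiv_symm_apply, Fin.removeNth,
          Fin.zero_succAbove, Fin.tail]
      rw [step, lintegral_prod_mul ((hf 0).aemeasurable) hg.aemeasurable,
        ih (fun j => f (Fin.succ j)) (fun j => hf _), Fin.prod_univ_succ]

private lemma eLpNorm_pi_prod_aux {d m : ℕ} (c : Fin m → (Fin d → ℝ) → ℝ)
    (hc : ∀ i, Measurable (c i)) :
    eLpNorm (fun q : Fin m → (Fin d → ℝ) => ∏ i, c i (q i)) 2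
        (volume : Measure (Fin m → (Fin d → ℝ))) = ∏ i, eLpNorm (c i) 2 volume := by
  have h2 : (2 : ℝ≥0∞) ≠ 0 := by norm_num
  have h2' : (2 : ℝ≥0∞) ≠ ∞ := by norm_num
  have htr : (2 : ℝ≥0∞).toReal = ((2 : ℕ) : ℝ) := by norm_num
  have key := lintegral_pi_prod_aux (volume : Measure (Fin d → ℝ)) (n := m)
      (fun i x => ((‖c i x‖₊ : ℝ≥0∞)) ^ (2 : ℕ))
      (fun i => ((hc i).nnnorm.coe_nnreal_ennreal).pow_const _)
  rw [eLpNorm_eq_lintegral_rpow_enorm_toReal h2 h2', htr]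
  simp only [enorm_eq_nnnorm]
  have heq : (∫⁻ q : Fin m → (Fin d → ℝ),
        (‖∏ i, c i (q i)‖₊ : ℝ≥0∞) ^ (((2:ℕ):ℝ)) ∂volume)
      = ∏ i, ∫⁻ x, ((‖c i x‖₊ : ℝ≥0∞)) ^ (2 : ℕ) ∂volume := by
    rw [show (volume : Measure (Fin m → (Fin d → ℝ))) = Measure.pi (fun _ => volume)
      from volume_pi]
    rw [← key]
    refine lintegral_congr fun q => ?_
    rw [ENNReal.rpow_natCast, nnnorm_prod, ENNReal.coe_finset_prod, ← Finset.prod_pow]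
  rw [heq]
  rw [← ENNReal.prod_rpow_of_nonneg (by norm_num : (0:ℝ) ≤ 1 / ((2:ℕ):ℝ))]
  refine Finset.prod_congr rfl fun i _ => ?_
  rw [eLpNorm_eq_lintegral_rpow_enorm_toReal h2 h2', htr]
  simp only [enorm_eq_nnnorm]
  congr 1
  refine lintegral_congr fun x => ?_
  rw [ENNReal.rpow_natCast]

theorem coefficient_bounds_give_bounded_fock_map
    {d : ℕ}
    (h : (Fin d → ℝ) → ℝ) (hmeas : Measurable h) (hnn : ∀ x, 0 ≤ h x)
    (hL2 : MemLp h 2 (volume : Measure (Fin d → ℝ)))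
    (hbdd : ∃ Hb : ℝ, ∀ x, h x ≤ Hb)
    (M : ℝ) (hM : 0 ≤ M)
    (b : (n : ℕ) → (Fin (n + 1) → (Fin d → ℝ)) → (Fin d → ℝ) → ℂ)
    (dd : (n : ℕ) → (Fin (n + 2) → (Fin d → ℝ)) → (Fin d → ℝ) → ℂ)
    (hbmeas : ∀ n, Measurable (Function.uncurry (b n)))
    (hdmeas : ∀ n, Measurable (Function.uncurry (dd n)))
    (hbsym : ∀ n, ∀ σ : Equiv.Perm (Fin (n + 1)), ∀ q q', b n (q ∘ σ) q' = b n q q')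
    (hdsym : ∀ n, ∀ σ : Equiv.Perm (Fin (n + 2)), ∀ q q', dd n (q ∘ σ) q' = dd n q q')
    (hb : ∀ n, ∀ q : Fin (n + 1) → (Fin d → ℝ), ∀ q',
      ‖b n q q'‖ ≤ M * ∏ i, h (q i))
    (hd : ∀ n, ∀ q : Fin (n + 2) → (Fin d → ℝ), ∀ q',
      ‖dd n q q'‖ ≤ M * h q' * ∏ i, h (q i)) :
    ∃ C : ℝ, 0 < C ∧
      ∀ f₁ : Lp ℂ 2 (volume : Measure (Fin d → ℝ)),
        (∀ n : ℕ,
          MemLp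
            (fun q : Fin (n + 2) → (Fin d → ℝ) =>
              (∑ i, b n (fun j => q (Fin.succAbove i j)) (q i) * f₁ (q i)) +
                ∫ q' : Fin d → ℝ, dd n q q' * f₁ q')
            2 (volume : Measure (Fin (n + 2) → (Fin d → ℝ)))) ∧
        ∑' n : ℕ,
            ((1 : ℝ≥0∞) / (Nat.factorial (n + 2) : ℝ≥0∞)) *
              (eLpNorm
                (fun q : Fin (n + 2) → (Fin d → ℝ) =>
                  (∑ i, b n (fun j => q (Fin.succAbove i j)) (q i) * f₁ (q i)) +
                    ∫ q' : Fin d → ℝ, dd n q q' * f₁ q')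
                2 (volume : Measure (Fin (n + 2) → (Fin d → ℝ)))) ^ 2 ≤
          ENNReal.ofReal ((C * M * ‖f₁‖) ^ 2) := by
  classical
  -- basic notation
  set H : ℝ≥0∞ := eLpNorm h 2 volume with hHdef
  have hHne : H ≠ ∞ := hL2.2.ne
  set a : ℝ := H.toReal with hadef
  have ha0 : 0 ≤ a := ENNReal.toReal_nonneg
  have hHa : H = ENNReal.ofReal a := (ENNReal.ofReal_toReal hHne).symm
  -- the series constant
  set c : ℕ → ℝ := fun n => ((n : ℝ) + 2) * a ^ (n + 1) + a ^ (n + 3) with hcdef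
  have hc0 : ∀ n, 0 ≤ c n := fun n => by positivity
  set u : ℕ → ℝ := fun n => (c n) ^ 2 / (Nat.factorial (n + 2) : ℝ) with hudef
  have hu0 : ∀ n, 0 ≤ u n := fun n => by positivity
  have husum : Summable u := by
    have hv : Summable (fun n : ℕ => (2 * (1 + a ^ 2) ^ 2 * a ^ 2) * ((a ^ 2) ^ n / (n.factorial : ℝ))) :=
      (Real.summable_pow_div_factorial (a ^ 2)).mul_left _
    refine Summable.of_nonneg_of_le hu0 (fun n => ?_) hv
    have hfac : ((n + 2).factorial : ℝ) = ((n : ℝ) + 2) * ((n : ℝ) + 1) * (n.factorial : ℝ) := by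
      rw [show n + 2 = (n + 1) + 1 from rfl, Nat.factorial_succ, Nat.factorial_succ]
      push_cast; ring
    have hfacpos : (0 : ℝ) < (n.factorial : ℝ) := by positivity
    have hQ : c n = (a ^ n) * a * ((n : ℝ) + 2) + (a ^ n) * a * a ^ 2 := by
      simp only [hcdef]; ring
    rw [hudef]
    simp only []
    rw [div_le_iff₀ (by positivity), hfac]
    have h1 : ((n:ℝ) + 2) + a ^ 2 ≤ ((n:ℝ) + 2) * (1 + a ^ 2) := by nlinarith
    have h2 : ((n:ℝ) + 2) ^ 2 ≤ 2 * ((n:ℝ) + 1) * ((n:ℝ) + 2) := by nlinarith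
    have hQ2 : (c n) ^ 2 = (a ^ n) ^ 2 * a ^ 2 * (((n:ℝ) + 2) + a ^ 2) ^ 2 := by
      rw [hQ]; ring
    have hbound : (c n) ^ 2 ≤ (a ^ n) ^ 2 * a ^ 2 * (2 * ((n:ℝ)+1) * ((n:ℝ)+2) * (1 + a ^ 2) ^ 2) := by
      rw [hQ2]
      have hsq : (((n:ℝ) + 2) + a ^ 2) ^ 2 ≤ (((n:ℝ) + 2) * (1 + a ^ 2)) ^ 2 := by
        apply pow_le_pow_left₀ (by positivity) h1
      refine mul_le_mul_of_nonneg_left ?_ (by positivity)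
      calc ((n:ℝ) + 2 + a ^ 2) ^ 2 ≤ (((n:ℝ)+2)*(1+a^2))^2 := hsq
        _ = ((n:ℝ)+2)^2 * (1+a^2)^2 := by ring
        _ ≤ (2*((n:ℝ)+1)*((n:ℝ)+2)) * (1+a^2)^2 := mul_le_mul_of_nonneg_right h2 (by positivity)
        _ = 2 * ((n:ℝ)+1) * ((n:ℝ)+2) * (1 + a ^ 2) ^ 2 := by ring
    calc (c n) ^ 2 ≤ (a ^ n) ^ 2 * a ^ 2 * (2 * ((n:ℝ)+1) * ((n:ℝ)+2) * (1 + a ^ 2) ^ 2) := hbound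
      _ = 2 * (1 + a ^ 2) ^ 2 * a ^ 2 * ((a ^ 2) ^ n / (n.factorial : ℝ)) *
            (((n:ℝ) + 2) * (((n:ℝ) + 1) * (n.factorial : ℝ))) := by
          rw [← pow_mul, ← pow_mul]
          field_simp
          ring
      _ = 2 * (1 + a ^ 2) ^ 2 * a ^ 2 * ((a ^ 2) ^ n / (n.factorial : ℝ)) *
            (((n:ℝ) + 2) * ((n:ℝ) + 1) * (n.factorial : ℝ)) := by ring
  set S : ℝ := ∑' n, u n with hSdef
  have hS0 : 0 ≤ S := tsum_nonneg hu0
  refine ⟨Real.sqrt S + 1, by positivity, ?_⟩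
  intro f₁
  set f : (Fin d → ℝ) → ℂ := ⇑f₁ with hfdef
  have hfm : Measurable f := (Lp.stronglyMeasurable f₁).measurable
  have hf2 : MemLp f 2 volume := Lp.memLp f₁
  set Nf : ℝ≥0∞ := eLpNorm f 2 volume with hNfdef
  have hNfne : Nf ≠ ∞ := (Lp.eLpNorm_lt_top f₁).ne
  have hNf : Nf = ENNReal.ofReal ‖f₁‖ := by
    rw [Lp.norm_def, ENNReal.ofReal_toReal hNfne]
  set g : (Fin d → ℝ) → ℝ := fun x => ‖f x‖ with hgdef
  have hgm : Measurable g := hfm.norm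
  have hg2 : MemLp g 2 volume := hf2.norm
  have hNg : eLpNorm g 2 volume = Nf := eLpNorm_norm f
  set w : (Fin d → ℝ) → ℝ := fun x => h x * g x with hwdef
  have hwm : Measurable w := hmeas.mul hgm
  have h121 : (1 : ℝ≥0∞) / 1 = 1 / 2 + 1 / 2 := by
    rw [ENNReal.div_add_div_same, one_add_one_eq_two, div_one]
    exact (ENNReal.div_self (by norm_num) (by norm_num)).symm
  have hw1 : MemLp w 1 volume := by
    have hsm : MemLp (h • g) 1 volume := hg2.smul (φ := h) hL2
    have : h • g = w := by funext x; simp [hwdef, smul_eq_mul]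
    rwa [this] at hsm
  have hwint : Integrable w volume := memLp_one_iff_integrable.mp hw1
  set K : ℝ := ∫ x, w x with hKdef
  have hK0 : 0 ≤ K := integral_nonneg fun x => mul_nonneg (hnn x) (norm_nonneg _)
  have hKle : ENNReal.ofReal K ≤ H * Nf := by
    have h1 : eLpNorm w 1 volume ≤ H * Nf := by
      have h2 : eLpNorm (h • g) 1 volume ≤ eLpNorm h 2 volume * eLpNorm g 2 volume :=
        eLpNorm_smul_le_mul_eLpNorm (f := g) hg2.1 (φ := h) hL2.1
      rw [hNg] at h2
      have : h • g = w := by funext x; simp [hwdef, smul_eq_mul]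
      rwa [this] at h2
    have h3 : ENNReal.ofReal K = eLpNorm w 1 volume := by
      rw [eLpNorm_one_eq_lintegral_enorm, ← ofReal_integral_norm_eq_lintegral_enorm hwint,
        hKdef]
      congr 1
      refine integral_congr_ae (Filter.Eventually.of_forall fun x => ?_)
      exact (Real.norm_of_nonneg (mul_nonneg (hnn x) (norm_nonneg _))).symm
    rw [h3]; exact h1
  -- per-level estimate
  have key : ∀ n : ℕ,
      MemLp (fun q : Fin (n + 2) → (Fin d → ℝ) =>
          (∑ i, b n (fun j => q (Fin.succAbove i j)) (q i) * f (q i)) +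
            ∫ q' : Fin d → ℝ, dd n q q' * f q') 2
        (volume : Measure (Fin (n + 2) → (Fin d → ℝ))) ∧
      eLpNorm (fun q : Fin (n + 2) → (Fin d → ℝ) =>
          (∑ i, b n (fun j => q (Fin.succAbove i j)) (q i) * f (q i)) +
            ∫ q' : Fin d → ℝ, dd n q q' * f q') 2
        (volume : Measure (Fin (n + 2) → (Fin d → ℝ)))
        ≤ ENNReal.ofReal M * Nf * (((n : ℝ≥0∞) + 2) * H ^ (n + 1) + H ^ (n + 3)) := by
    intro n
    set A : Fin (n + 2) → (Fin (n + 2) → (Fin d → ℝ)) → ℂ :=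
      fun i q => b n (fun j => q (Fin.succAbove i j)) (q i) * f (q i) with hAdef
    set B : (Fin (n + 2) → (Fin d → ℝ)) → ℂ :=
      fun q => ∫ q' : Fin d → ℝ, dd n q q' * f q' with hBdef
    have hAmeas : ∀ i, Measurable (A i) := by
      intro i
      have h1 : Measurable fun q : Fin (n + 2) → (Fin d → ℝ) =>
          ((fun j => q (Fin.succAbove i j)), q i) :=
        (measurable_pi_lambda _ fun j => measurable_pi_apply _).prodMk (measurable_pi_apply i)
      exact ((hbmeas n).comp h1).mul (hfm.comp (measurable_pi_apply i))
    have hAle : ∀ i, eLpNorm (A i) 2 volume ≤ ENNReal.ofReal M * (Nf * H ^ (n + 1)) := by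
      intro i
      set ci : Fin (n + 2) → (Fin d → ℝ) → ℝ := fun j => if j = i then g else h with hcidef
      have hcim : ∀ j, Measurable (ci j) := fun j => by
        by_cases hj : j = i <;> simp [hcidef, hj, hgm, hmeas]
      have hpt : ∀ q : Fin (n + 2) → (Fin d → ℝ), ‖A i q‖ ≤ M * ∏ j, ci j (q j) := by
        intro q
        have hprodci : ∏ j, ci j (q j)
            = g (q i) * ∏ j : Fin (n + 1), h (q (Fin.succAbove i j)) := by
          rw [Fin.prod_univ_succAbove (fun j => ci j (q j)) i]
          simp only [hcidef, if_pos rfl]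
          congr 1
          exact Finset.prod_congr rfl fun j _ => by rw [if_neg (Fin.succAbove_ne i j)]
        calc ‖A i q‖
            = ‖b n (fun j => q (Fin.succAbove i j)) (q i)‖ * g (q i) := norm_mul _ _
          _ ≤ (M * ∏ j : Fin (n + 1), h (q (Fin.succAbove i j))) * g (q i) :=
              mul_le_mul_of_nonneg_right (hb n _ _) (norm_nonneg _)
          _ = M * ∏ j, ci j (q j) := by rw [hprodci]; ring
      have hXp : eLpNorm (fun q : Fin (n + 2) → (Fin d → ℝ) => ∏ j, ci j (q j)) 2 volume
          = Nf * H ^ (n + 1) := by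
        rw [eLpNorm_pi_prod_aux ci hcim,
          Fin.prod_univ_succAbove (fun j => eLpNorm (ci j) 2 volume) i]
        have h1 : eLpNorm (ci i) 2 volume = Nf := by
          rw [hcidef]; simp only [if_pos rfl]; exact hNg
        have h2 : ∏ j : Fin (n + 1), eLpNorm (ci (Fin.succAbove i j)) 2 volume = H ^ (n + 1) := by
          have : ∀ j : Fin (n + 1), eLpNorm (ci (Fin.succAbove i j)) 2 volume = H := by
            intro j
            rw [hcidef]; simp only [if_neg (Fin.succAbove_ne i j)]
            rfl
          simp [this]
        rw [h1, h2]
      calc eLpNorm (A i) 2 volume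
          ≤ eLpNorm (fun q : Fin (n + 2) → (Fin d → ℝ) => M * ∏ j, ci j (q j)) 2 volume :=
            eLpNorm_mono_real hpt
        _ = (‖M‖₊ : ℝ≥0∞) * eLpNorm (fun q : Fin (n + 2) → (Fin d → ℝ) => ∏ j, ci j (q j)) 2 volume := by
            rw [show (fun q : Fin (n + 2) → (Fin d → ℝ) => M * ∏ j, ci j (q j))
              = (M • fun q : Fin (n + 2) → (Fin d → ℝ) => ∏ j, ci j (q j)) from
              funext fun q => by simp [smul_eq_mul], eLpNorm_const_smul]
            rfl
        _ = ENNReal.ofReal M * (Nf * H ^ (n + 1)) := by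
            rw [hXp, ← enorm_eq_nnnorm, Real.enorm_eq_ofReal hM]
    have hAmem : ∀ i, MemLp (A i) 2 (volume : Measure (Fin (n + 2) → (Fin d → ℝ))) := by
      intro i
      refine ⟨(hAmeas i).aestronglyMeasurable, lt_of_le_of_lt (hAle i) ?_⟩
      exact ENNReal.mul_lt_top ENNReal.ofReal_lt_top
        (ENNReal.mul_lt_top hNfne.lt_top (ENNReal.pow_lt_top hHne.lt_top))
    have hdq : ∀ q : Fin (n + 2) → (Fin d → ℝ),
        Measurable (fun q' : Fin d → ℝ => dd n q q' * f q') := fun q =>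
      ((hdmeas n).comp (measurable_const.prodMk measurable_id)).mul hfm
    have hptB : ∀ (q : Fin (n + 2) → (Fin d → ℝ)) (q' : Fin d → ℝ),
        ‖dd n q q' * f q'‖ ≤ (M * ∏ i, h (q i)) * w q' := by
      intro q q'
      calc ‖dd n q q' * f q'‖ = ‖dd n q q'‖ * ‖f q'‖ := norm_mul _ _
        _ ≤ (M * h q' * ∏ i, h (q i)) * ‖f q'‖ :=
            mul_le_mul_of_nonneg_right (hd n q q') (norm_nonneg _)
        _ = (M * ∏ i, h (q i)) * w q' := by
            show _ = (M * ∏ i, h (q i)) * (h q' * ‖f q'‖); ring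
    have hBint : ∀ q : Fin (n + 2) → (Fin d → ℝ),
        Integrable (fun q' : Fin d → ℝ => dd n q q' * f q') volume := fun q =>
      Integrable.mono' (hwint.const_mul (M * ∏ i, h (q i))) (hdq q).aestronglyMeasurable
        (Filter.Eventually.of_forall fun q' => hptB q q')
    have hBpt : ∀ q : Fin (n + 2) → (Fin d → ℝ), ‖B q‖ ≤ (M * K) * ∏ i, h (q i) := by
      intro q
      calc ‖B q‖ ≤ ∫ q' : Fin d → ℝ, (M * ∏ i, h (q i)) * w q' :=
          norm_integral_le_of_norm_le (hwint.const_mul _)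
            (Filter.Eventually.of_forall fun q' => hptB q q')
        _ = (M * ∏ i, h (q i)) * K := by rw [integral_const_mul, hKdef]
        _ = (M * K) * ∏ i, h (q i) := by ring
    have hBsm : StronglyMeasurable B := by
      have hprodmeas : Measurable (fun p : (Fin (n + 2) → (Fin d → ℝ)) × (Fin d → ℝ) =>
          dd n p.1 p.2 * f p.2) := (hdmeas n).mul (hfm.comp measurable_snd)
      exact hprodmeas.stronglyMeasurable.integral_prod_right'
    have hBle : eLpNorm B 2 volume ≤ ENNReal.ofReal M * ((H * Nf) * H ^ (n + 2)) := by
      calc eLpNorm B 2 volume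
          ≤ eLpNorm (fun q : Fin (n + 2) → (Fin d → ℝ) => (M * K) * ∏ i, h (q i)) 2 volume :=
            eLpNorm_mono_real hBpt
        _ = (‖M * K‖₊ : ℝ≥0∞) * eLpNorm (fun q : Fin (n + 2) → (Fin d → ℝ) => ∏ i, h (q i)) 2 volume := by
            rw [show (fun q : Fin (n + 2) → (Fin d → ℝ) => (M * K) * ∏ i, h (q i))
              = ((M * K) • fun q : Fin (n + 2) → (Fin d → ℝ) => ∏ i, h (q i)) from
              funext fun q => by simp [smul_eq_mul], eLpNorm_const_smul]
            rfl
        _ = ENNReal.ofReal (M * K) * H ^ (n + 2) := by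
            rw [eLpNorm_pi_prod_aux (fun _ => h) (fun _ => hmeas),
              ← enorm_eq_nnnorm, Real.enorm_eq_ofReal (mul_nonneg hM hK0)]
            congr 1
            simp
            rfl
        _ ≤ ENNReal.ofReal M * ((H * Nf) * H ^ (n + 2)) := by
            rw [ENNReal.ofReal_mul hM, mul_assoc]
            exact mul_le_mul' le_rfl (mul_le_mul' hKle le_rfl)
    have hBmem : MemLp B 2 (volume : Measure (Fin (n + 2) → (Fin d → ℝ))) := by
      refine ⟨hBsm.aestronglyMeasurable, lt_of_le_of_lt hBle ?_⟩
      exact ENNReal.mul_lt_top ENNReal.ofReal_lt_top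
        (ENNReal.mul_lt_top (ENNReal.mul_lt_top hHne.lt_top hNfne.lt_top)
          (ENNReal.pow_lt_top hHne.lt_top))
    have hsum_mem : MemLp (fun q : Fin (n + 2) → (Fin d → ℝ) => ∑ i, A i q) 2
        (volume : Measure (Fin (n + 2) → (Fin d → ℝ))) :=
      memLp_finset_sum Finset.univ (fun i _ => hAmem i)
    have hmem : MemLp (fun q : Fin (n + 2) → (Fin d → ℝ) => (∑ i, A i q) + B q) 2
        (volume : Measure (Fin (n + 2) → (Fin d → ℝ))) := hsum_mem.add hBmem
    have hsumle : eLpNorm (fun q : Fin (n + 2) → (Fin d → ℝ) => ∑ i, A i q) 2 volume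
        ≤ ∑ i : Fin (n + 2), eLpNorm (A i) 2 volume := by
      have := eLpNorm_sum_le (μ := (volume : Measure (Fin (n + 2) → (Fin d → ℝ))))
        (f := A) (s := Finset.univ) (fun i _ => (hAmem i).1) one_le_two
      have heq : (∑ i : Fin (n + 2), A i) = fun q => ∑ i, A i q := by
        funext q; simp [Finset.sum_apply]
      rwa [heq] at this
    have hnorm : eLpNorm (fun q : Fin (n + 2) → (Fin d → ℝ) => (∑ i, A i q) + B q) 2 volume
        ≤ ENNReal.ofReal M * Nf * (((n : ℝ≥0∞) + 2) * H ^ (n + 1) + H ^ (n + 3)) := by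
      calc eLpNorm (fun q : Fin (n + 2) → (Fin d → ℝ) => (∑ i, A i q) + B q) 2 volume
          ≤ eLpNorm (fun q : Fin (n + 2) → (Fin d → ℝ) => ∑ i, A i q) 2 volume
              + eLpNorm B 2 volume := eLpNorm_add_le hsum_mem.1 hBmem.1 one_le_two
        _ ≤ (∑ _i : Fin (n + 2), ENNReal.ofReal M * (Nf * H ^ (n + 1)))
              + ENNReal.ofReal M * ((H * Nf) * H ^ (n + 2)) :=
            add_le_add (hsumle.trans (Finset.sum_le_sum fun i _ => hAle i)) hBle
        _ = ((n : ℝ≥0∞) + 2) * (ENNReal.ofReal M * (Nf * H ^ (n + 1)))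
              + ENNReal.ofReal M * ((H * Nf) * H ^ (n + 2)) := by
            rw [Finset.sum_const, Finset.card_univ, Fintype.card_fin, nsmul_eq_mul]
            push_cast
            ring
        _ = ENNReal.ofReal M * Nf * (((n : ℝ≥0∞) + 2) * H ^ (n + 1) + H ^ (n + 3)) := by ring
    exact ⟨hmem, hnorm⟩
  refine ⟨fun n => (key n).1, ?_⟩
  -- sum the estimates
  have hterm : ∀ n : ℕ,
      ((1 : ℝ≥0∞) / (Nat.factorial (n + 2) : ℝ≥0∞)) *
        (eLpNorm (fun q : Fin (n + 2) → (Fin d → ℝ) =>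
            (∑ i, b n (fun j => q (Fin.succAbove i j)) (q i) * f (q i)) +
              ∫ q' : Fin d → ℝ, dd n q q' * f q') 2
          (volume : Measure (Fin (n + 2) → (Fin d → ℝ)))) ^ 2
      ≤ ENNReal.ofReal ((M * ‖f₁‖) ^ 2) * ENNReal.ofReal (u n) := by
    intro n
    have h1 : eLpNorm (fun q : Fin (n + 2) → (Fin d → ℝ) =>
          (∑ i, b n (fun j => q (Fin.succAbove i j)) (q i) * f (q i)) +
            ∫ q' : Fin d → ℝ, dd n q q' * f q') 2
        (volume : Measure (Fin (n + 2) → (Fin d → ℝ)))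
        ≤ ENNReal.ofReal (M * ‖f₁‖ * c n) := by
      refine (key n).2.trans (le_of_eq ?_)
      have hn2 : ((n : ℝ≥0∞) + 2) = ENNReal.ofReal ((n : ℝ) + 2) := by
        rw [ENNReal.ofReal_add (by positivity) (by norm_num), ENNReal.ofReal_natCast]
        norm_num
      rw [hNf, hHa, hn2, ← ENNReal.ofReal_pow ha0, ← ENNReal.ofReal_pow ha0,
        ← ENNReal.ofReal_mul (show (0:ℝ) ≤ (n:ℝ) + 2 by positivity),
        ← ENNReal.ofReal_add (show (0:ℝ) ≤ ((n:ℝ) + 2) * a ^ (n + 1) by positivity)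
          (by positivity),
        ← ENNReal.ofReal_mul hM, ← ENNReal.ofReal_mul (mul_nonneg hM (norm_nonneg _))]
    have h2 : (eLpNorm (fun q : Fin (n + 2) → (Fin d → ℝ) =>
          (∑ i, b n (fun j => q (Fin.succAbove i j)) (q i) * f (q i)) +
            ∫ q' : Fin d → ℝ, dd n q q' * f q') 2
        (volume : Measure (Fin (n + 2) → (Fin d → ℝ)))) ^ 2
        ≤ ENNReal.ofReal ((M * ‖f₁‖ * c n) ^ 2) := by
      rw [ENNReal.ofReal_pow (by positivity)]
      exact pow_le_pow_left' h1 2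
    have h3 : ((1 : ℝ≥0∞) / (Nat.factorial (n + 2) : ℝ≥0∞)) *
        ENNReal.ofReal ((M * ‖f₁‖ * c n) ^ 2)
        = ENNReal.ofReal ((M * ‖f₁‖) ^ 2) * ENNReal.ofReal (u n) := by
      have hfacpos : (0 : ℝ) < ((n + 2).factorial : ℝ) := by positivity
      have hur : u n = (c n) ^ 2 / ((n + 2).factorial : ℝ) := by rw [hudef]
      rw [hur, ENNReal.ofReal_div_of_pos hfacpos, ENNReal.ofReal_natCast,
        show (M * ‖f₁‖ * c n) ^ 2 = (M * ‖f₁‖) ^ 2 * (c n) ^ 2 from by ring,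
        ENNReal.ofReal_mul (by positivity)]
      simp only [one_div, ENNReal.div_eq_inv_mul]
      ring
    calc ((1 : ℝ≥0∞) / (Nat.factorial (n + 2) : ℝ≥0∞)) *
          (eLpNorm (fun q : Fin (n + 2) → (Fin d → ℝ) =>
              (∑ i, b n (fun j => q (Fin.succAbove i j)) (q i) * f (q i)) +
                ∫ q' : Fin d → ℝ, dd n q q' * f q') 2
            (volume : Measure (Fin (n + 2) → (Fin d → ℝ)))) ^ 2
        ≤ ((1 : ℝ≥0∞) / (Nat.factorial (n + 2) : ℝ≥0∞)) *
            ENNReal.ofReal ((M * ‖f₁‖ * c n) ^ 2) := mul_le_mul' le_rfl h2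
      _ = ENNReal.ofReal ((M * ‖f₁‖) ^ 2) * ENNReal.ofReal (u n) := h3
  calc ∑' n : ℕ, ((1 : ℝ≥0∞) / (Nat.factorial (n + 2) : ℝ≥0∞)) *
        (eLpNorm (fun q : Fin (n + 2) → (Fin d → ℝ) =>
            (∑ i, b n (fun j => q (Fin.succAbove i j)) (q i) * f (q i)) +
              ∫ q' : Fin d → ℝ, dd n q q' * f q') 2
          (volume : Measure (Fin (n + 2) → (Fin d → ℝ)))) ^ 2
      ≤ ∑' n : ℕ, ENNReal.ofReal ((M * ‖f₁‖) ^ 2) * ENNReal.ofReal (u n) :=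
        ENNReal.tsum_le_tsum hterm
    _ = ENNReal.ofReal ((M * ‖f₁‖) ^ 2) * ∑' n : ℕ, ENNReal.ofReal (u n) :=
        ENNReal.tsum_mul_left
    _ = ENNReal.ofReal ((M * ‖f₁‖) ^ 2) * ENNReal.ofReal S := by
        rw [← ENNReal.ofReal_tsum_of_nonneg hu0 husum]
    _ = ENNReal.ofReal ((M * ‖f₁‖) ^ 2 * S) := (ENNReal.ofReal_mul (by positivity)).symm
    _ ≤ ENNReal.ofReal (((Real.sqrt S + 1) * M * ‖f₁‖) ^ 2) := by
        apply ENNReal.ofReal_le_ofReal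
        have hSC : S ≤ (Real.sqrt S + 1) ^ 2 := by
          nlinarith [Real.sq_sqrt hS0, Real.sqrt_nonneg S]
        calc (M * ‖f₁‖) ^ 2 * S ≤ (M * ‖f₁‖) ^ 2 * (Real.sqrt S + 1) ^ 2 :=
            mul_le_mul_of_nonneg_left hSC (by positivity)
          _ = ((Real.sqrt S + 1) * M * ‖f₁‖) ^ 2 := by ring
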